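/- Let A be an m×n real matrix such that S^+(Ax) ≤ S^-(x) for every nonzero vector x ∈ ℝ^n. Then every p×p minor of A is nonzero, for all 1 ≤ p ≤ min{m,n}. -/

import Mathlib

open Matrix Filter

/-- Number of sign changes in a list of reals (consecutive pairs with negative product). -/
noncomputable def signChanges (l : List ℝ) : ℕ :=
  (l.zip l.tail).countP (fun p => decide (p.1 * p.2 < 0))

/-- `S^-(v)`: sign changes of the coordinates of `v` after discarding zero entries. -/
noncomputable def Sm {n : ℕ} (v : Fin n → ℝ) : ℕ :=
  signChanges ((List.ofFn v).filter (fun x => decide (x ≠ 0)))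

/-- `S^+(v)`: maximal number of sign changes over all ±1 completions of the zero
entries of `v`, with the convention `S^+(0) = n`. -/
noncomputable def Sp {n : ℕ} (v : Fin n → ℝ) : ℕ :=
  if v = 0 then n
  else Finset.univ.sup (fun σ : Fin n → Bool =>
    signChanges (List.ofFn (fun i => if v i = 0 then (if σ i then (1:ℝ) else -1) else v i)))

/-- First nonzero entry of a vector (`0` if the vector is zero). -/
noncomputable def firstNz {n : ℕ} (v : Fin n → ℝ) : ℝ :=
  ((List.ofFn v).filter (fun x => decide (x ≠ 0))).headI

/-- `A` is strictly sign regular with sign pattern `ε`: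
every `r × r` minor (`1 ≤ r ≤ min m n`) is nonzero with sign `ε r`. -/
def ssrPattern {m n : ℕ} (A : Matrix (Fin m) (Fin n) ℝ) (ε : ℕ → ℝ) : Prop :=
  ∀ r : ℕ, 1 ≤ r → r ≤ min m n → ∀ (f : Fin r → Fin m) (g : Fin r → Fin n),
    StrictMono f → StrictMono g → 0 < ε r * (A.submatrix f g).det

/-- `A` is sign regular with sign pattern `ε`:
every nonzero `r × r` minor (`1 ≤ r ≤ min m n`) has sign `ε r`. -/
def srPattern {m n : ℕ} (A : Matrix (Fin m) (Fin n) ℝ) (ε : ℕ → ℝ) : Prop :=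
  ∀ r : ℕ, 1 ≤ r → r ≤ min m n → ∀ (f : Fin r → Fin m) (g : Fin r → Fin n),
    StrictMono f → StrictMono g → 0 ≤ ε r * (A.submatrix f g).det

/-- The map `f` picks out consecutive indices. -/
def Contig {r m : ℕ} (f : Fin r → Fin m) : Prop :=
  ∃ a : ℕ, ∀ i : Fin r, (f i : ℕ) = a + (i : ℕ)

lemma countP_ofFn' {α : Type*} (P : α → Bool) :
    ∀ {k : ℕ} (u : Fin k → α),
      (List.ofFn u).countP P = (Finset.univ.filter (fun i => P (u i) = true)).card := by
  intro k
  induction k with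
  | zero => intro u; simp
  | succ k ih =>
    intro u
    rw [List.ofFn_succ, List.countP_cons, ih, Finset.card_filter, Finset.card_filter,
      Fin.sum_univ_succ]
    cases h : P (u 0) <;> simp [h, Function.comp] <;> omega

lemma zipTail {α : Type*} {k : ℕ} (u : Fin k → α) :
    (List.ofFn u).zip (List.ofFn u).tail
      = List.ofFn (fun i : Fin (k-1) => (u ⟨i.1, by omega⟩, u ⟨i.1+1, by omega⟩)) := by
  apply List.ext_getElem
  · simp [List.length_zip]
  · intro i h1 h2
    simp [List.getElem_zip, List.getElem_tail, List.getElem_ofFn]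

open scoped Classical in
noncomputable def fillV {m : ℕ} (y : Fin m → ℝ) (t : ℕ) (s : ℝ) : ℕ → ℝ
  | 0 => if h : 0 < m then (if y ⟨0, h⟩ ≠ 0 then y ⟨0, h⟩ else (if Even t then s else -s)) else 1
  | (k+1) => if h : k+1 < m then
      (if y ⟨k+1, h⟩ ≠ 0 then y ⟨k+1, h⟩
       else if k+1 < t then (if Even (t - (k+1)) then s else -s)
       else (if 0 < fillV y t s k then (-1:ℝ) else 1))
     else 1

section fillfacts
variable {m : ℕ} {y : Fin m → ℝ} {t : ℕ} {s : ℝ}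

lemma fillV_nonzero (hs : s ≠ 0) (k : ℕ) : fillV y t s k ≠ 0 := by
  cases k with
  | zero => rw [fillV]; split_ifs <;> simp_all
  | succ k => rw [fillV]; split_ifs <;> simp_all

lemma fillV_of_ne (k : ℕ) (h : k < m) (hk : y ⟨k, h⟩ ≠ 0) : fillV y t s k = y ⟨k, h⟩ := by
  cases k with
  | zero => rw [fillV]; simp [h, hk]
  | succ k => rw [fillV]; simp [h, hk]

lemma fillV_of_lt (k : ℕ) (h : k < m) (hk : y ⟨k, h⟩ = 0) (hkt : k < t) :
    fillV y t s k = if Even (t - k) then s else -s := by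
  cases k with
  | zero => rw [fillV]; simp [h, hk]
  | succ k => rw [fillV]; simp [h, hk, hkt]

lemma fillV_of_gt (k : ℕ) (h : k + 1 < m) (hk : y ⟨k+1, h⟩ = 0) (hkt : t ≤ k) :
    fillV y t s (k+1) = if 0 < fillV y t s k then (-1:ℝ) else 1 := by
  rw [fillV]; simp [h, hk, Nat.not_lt.mpr (by omega : t ≤ k+1)]

end fillfacts

lemma sp_ge {m p : ℕ} (y : Fin m → ℝ) (f : Fin p → Fin m)
    (hf : Function.Injective f) (hz : ∀ i, y (f i) = 0) : p ≤ Sp y := by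
  classical
  by_cases hy : y = 0
  · rw [Sp, if_pos hy]
    simpa using Fintype.card_le_of_injective f hf
  · rw [Sp, if_neg hy]
    have hex : ∃ k : ℕ, ∃ h : k < m, y ⟨k, h⟩ ≠ 0 := by
      obtain ⟨i, hi⟩ := Function.ne_iff.mp hy
      exact ⟨i.1, i.isLt, by simpa using hi⟩
    obtain ⟨t, ⟨htm, hyt⟩, hmin⟩ :
        ∃ t, (∃ h : t < m, y ⟨t, h⟩ ≠ 0) ∧ ∀ k < t, ∀ h : k < m, y ⟨k, h⟩ = 0 := by
      refine ⟨Nat.find hex, Nat.find_spec hex, fun k hk h => ?_⟩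
      by_contra hne
      exact Nat.find_min hex hk ⟨h, hne⟩
    set s : ℝ := if 0 < y ⟨t, htm⟩ then 1 else -1 with hs_def
    have hs : s ≠ 0 := by rw [hs_def]; split_ifs <;> norm_num
    have hsy : 0 < s * y ⟨t, htm⟩ := by
      rw [hs_def]; rcases hyt.lt_or_gt with h | h
      · rw [if_neg (by linarith)]; linarith
      · rw [if_pos h]; nlinarith
    set σ : Fin m → Bool := fun i => decide (0 < fillV y t s i.1) with hσ
    refine le_trans ?_ (Finset.le_sup (Finset.mem_univ σ))
    set w : Fin m → ℝ := fun i => if y i = 0 then (if σ i then (1:ℝ) else -1) else y i with hw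
    show p ≤ signChanges (List.ofFn w)
    -- sign compatibility
    have hwF : ∀ i : Fin m, 0 < w i * fillV y t s i.1 := by
      intro i
      by_cases h0 : y i = 0
      · have hne := fillV_nonzero (y := y) (t := t) hs i.1
        have hwi : w i = if 0 < fillV y t s i.1 then (1:ℝ) else -1 := by
          simp [hw, hσ, h0]
        rcases hne.lt_or_gt with h1 | h1
        · rw [hwi, if_neg (not_lt.mpr h1.le)]; nlinarith
        · rw [hwi, if_pos h1]; nlinarith
      · have h2 : fillV y t s i.1 = y i :=
          fillV_of_ne (t := t) (s := s) i.1 i.isLt (by simpa using h0)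
        rw [hw]
        simp only [if_neg h0]
        rw [h2]
        exact mul_self_pos.mpr h0
    -- changes before t
    have hlt : ∀ k (h : k < m), y ⟨k, h⟩ = 0 → k < t →
        fillV y t s k * fillV y t s (k+1) < 0 := by
      intro k h hk0 hkt
      have hk1m : k + 1 < m := by omega
      rw [fillV_of_lt k h hk0 hkt]
      rcases Nat.lt_or_ge (k+1) t with h1 | h1
      · rw [fillV_of_lt (k+1) hk1m (hmin _ h1 _) h1]
        have hpar : Even (t - k) ↔ ¬ Even (t - (k+1)) := by
          have he : t - k = (t - (k+1)) + 1 := by omega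
          rw [he]; simp [Nat.even_add_one]
        have hss : 0 < s * s := mul_self_pos.mpr hs
        split_ifs with e1 e2
        · exact absurd e2 (hpar.mp e1)
        · nlinarith
        · nlinarith
        · exact absurd (hpar.mpr ‹¬ Even (t - (k+1))›) (by simp_all)
      · obtain rfl : t = k + 1 := by omega
        rw [fillV_of_ne (k+1) hk1m hyt]
        have h1k : k + 1 - k = 1 := by omega
        rw [h1k]
        norm_num
        nlinarith [hsy]
    -- changes after t
    have hgt : ∀ k (h : k + 1 < m), y ⟨k+1, h⟩ = 0 → t ≤ k →
        fillV y t s k * fillV y t s (k+1) < 0 := by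
      intro k h hk0 hkt
      rw [fillV_of_gt k h hk0 hkt]
      have hne := fillV_nonzero (y := y) (t := t) hs k
      rcases hne.lt_or_gt with h1 | h1
      · rw [if_neg (not_lt.mpr h1.le)]; linarith
      · rw [if_pos h1]; linarith
    -- f i avoids t
    have hft : ∀ i : Fin p, (f i).1 ≠ t := by
      intro i hit
      apply hyt
      have : (⟨t, htm⟩ : Fin m) = f i := Fin.ext hit.symm
      rw [this]; exact hz i
    -- counting
    rw [signChanges, zipTail, countP_ofFn']
    have hι : ∀ i : Fin p, (if (f i).1 < t then (f i).1 else (f i).1 - 1) < m - 1 := by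
      intro i
      have h1 := (f i).isLt
      have h2 := hft i
      split_ifs <;> omega
    set ι : Fin p → Fin (m-1) := fun i => ⟨_, hι i⟩ with hιdef
    refine le_trans (by simp : p ≤ (Finset.univ : Finset (Fin p)).card)
      (Finset.card_le_card_of_injOn ι (fun i _ => ?_) (fun i1 _ i2 _ hval => ?_))
    · -- membership
      simp only [Finset.mem_filter, Finset.mem_univ, true_and, decide_eq_true_eq]
      have hzi : y (f i) = 0 := hz i
      have him := (f i).isLt
      by_cases hcase : (f i).1 < t
      · have h1 := hwF ⟨(f i).1, by omega⟩
        have h2 := hwF ⟨(f i).1 + 1, by omega⟩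
        have hF := hlt (f i).1 (f i).isLt hzi hcase
        simp only [Finset.mem_coe, Finset.mem_filter, Finset.mem_univ, true_and, decide_eq_true_eq, hιdef, if_pos hcase]
        nlinarith [h1, h2, hF]
      · have hgt' : t < (f i).1 := lt_of_le_of_ne (not_lt.mp hcase) (Ne.symm (hft i))
        have hFin : (⟨(f i).1 - 1 + 1, by omega⟩ : Fin m) = ⟨(f i).1, him⟩ :=
          Fin.ext (show (f i).1 - 1 + 1 = (f i).1 by omega)
        have h1 := hwF ⟨(f i).1 - 1, by omega⟩
        have h2 := hwF ⟨(f i).1, him⟩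
        have hy0 : y ⟨(f i).1 - 1 + 1, by omega⟩ = 0 := by rw [hFin]; exact hzi
        have hF := hgt ((f i).1 - 1) (by omega) hy0 (by omega)
        have he : (f i).1 - 1 + 1 = (f i).1 := by omega
        rw [he] at hF
        simp only [Finset.mem_coe, Finset.mem_filter, Finset.mem_univ, true_and, decide_eq_true_eq, hιdef, if_neg hcase]
        rw [hFin]
        nlinarith [h1, h2, hF]
    · -- injectivity
      have hv : (if (f i1).1 < t then (f i1).1 else (f i1).1 - 1)
          = (if (f i2).1 < t then (f i2).1 else (f i2).1 - 1) := congrArg Fin.val hval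
      have e1 := hft i1
      have e2 := hft i2
      have l1 := (f i1).isLt
      have l2 := (f i2).isLt
      apply hf
      apply Fin.ext
      split_ifs at hv <;> omega


theorem stmt0 {m n : ℕ} (A : Matrix (Fin m) (Fin n) ℝ)
    (hVD : ∀ x : Fin n → ℝ, x ≠ 0 → Sp (A *ᵥ x) ≤ Sm x) :
    ∀ p : ℕ, 1 ≤ p → p ≤ min m n →
      ∀ (f : Fin p → Fin m) (g : Fin p → Fin n), StrictMono f → StrictMono g →
        (A.submatrix f g).det ≠ 0 := by
  intro p hp hpmn f g hf hg hdet
  classical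
  obtain ⟨c, hc0, hcB⟩ : ∃ v, v ≠ 0 ∧ (A.submatrix f g) *ᵥ v = 0 := by
    obtain ⟨v, hv, h0⟩ := (Matrix.exists_mulVec_eq_zero_iff).mpr hdet
    exact ⟨v, hv, h0⟩
  set x : Fin n → ℝ := fun j => ∑ i, if g i = j then c i else 0 with hx
  have hxg : ∀ i, x (g i) = c i := by
    intro i
    simp [hx, hg.injective.eq_iff]
  have hxne : x ≠ 0 := by
    obtain ⟨i, hi⟩ := Function.ne_iff.mp hc0
    intro h
    apply hi
    rw [← hxg i, h]
    rfl
  have hAx : ∀ i, (A *ᵥ x) (f i) = 0 := by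
    intro i
    have hrew : (A *ᵥ x) (f i) = ((A.submatrix f g) *ᵥ c) i := by
      simp only [Matrix.mulVec, dotProduct, Matrix.submatrix_apply, hx,
        Finset.mul_sum]
      rw [Finset.sum_comm]
      congr 1 with i'
      simp [mul_ite]
    rw [hrew, hcB]
    rfl
  have h1 : p ≤ Sp (A *ᵥ x) := sp_ge _ f hf.injective hAx
  have h2 : Sm x ≤ p - 1 := by
    rw [Sm, signChanges]
    set L := (List.ofFn x).filter (fun a => decide (a ≠ 0)) with hL
    have hlen : L.length ≤ p := by
      have hcp : L.length = (List.ofFn x).countP (fun a => decide (a ≠ 0)) :=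
        List.countP_eq_length_filter.symm
      rw [hcp, countP_ofFn']
      have hsub : Finset.univ.filter (fun i => (fun a => decide (a ≠ 0)) (x i) = true)
          ⊆ Finset.univ.image g := by
        intro j hj
        simp only [Finset.mem_filter, decide_eq_true_eq] at hj
        by_contra hng
        simp only [Finset.mem_image, Finset.mem_univ, true_and, not_exists] at hng
        apply hj.2
        rw [hx]
        apply Finset.sum_eq_zero
        intro i _
        exact if_neg (hng i)
      calc _ ≤ (Finset.univ.image g).card := Finset.card_le_card hsub
        _ ≤ (Finset.univ : Finset (Fin p)).card := Finset.card_image_le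
        _ = p := by simp
    calc (L.zip L.tail).countP _ ≤ (L.zip L.tail).length := List.countP_le_length
      _ = min L.length L.tail.length := List.length_zip
      _ ≤ p - 1 := by rw [List.length_tail]; omega
  have h3 := hVD x hxne
  omega
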